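/- The scalar multiple cB of the backward shift B on ℓ²(ℕ) induces a commutator map Δ_{cB} : K(ℓ²) → K(ℓ²), S ↦ cBS − ScB, on the compact operators, which is not hypercyclic for any constant c ∈ ℂ. -/

import Mathlib

open ContinuousLinearMap

namespace Stmt18Aux

noncomputable section

abbrev Hsp : Type := lp (fun _ : ℕ => ℂ) 2

/-- standard basis vectors -/
def ee (j : ℕ) : Hsp := lp.single 2 j 1

lemma ee_apply (j i : ℕ) : (ee j : ∀ _ : ℕ, ℂ) i = if i = j then 1 else 0 := by
  by_cases h : i = j
  · subst h; simp [ee, lp.single_apply_self]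
  · simp [ee, lp.single_apply_ne _ _ _ h, h]

lemma ee_norm (j : ℕ) : ‖ee j‖ = 1 := by
  have := lp.norm_single (E := fun _ : ℕ => ℂ) (p := 2) (by norm_num) j (1 : ℂ)
  simpa [ee] using this

/-- matrix entry of an operator -/
def entry (V : Hsp →L[ℂ] Hsp) (i j : ℕ) : ℂ := (V (ee j) : ∀ _ : ℕ, ℂ) i

lemma norm_entry_le (V : Hsp →L[ℂ] Hsp) (i j : ℕ) : ‖entry V i j‖ ≤ ‖V‖ := by
  have h1 : ‖entry V i j‖ ≤ ‖V (ee j)‖ :=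
    lp.norm_apply_le_norm (by norm_num) (V (ee j)) i
  have h2 : ‖V (ee j)‖ ≤ ‖V‖ * ‖ee j‖ := V.le_opNorm _
  rw [ee_norm, mul_one] at h2
  exact h1.trans h2

lemma entry_sub (V W : Hsp →L[ℂ] Hsp) (i j : ℕ) :
    entry (V - W) i j = entry V i j - entry W i j := by
  simp only [entry, ContinuousLinearMap.sub_apply, lp.coeFn_sub, Pi.sub_apply]

section WithB

variable (B : Hsp →L[ℂ] Hsp) (c : ℂ)

variable (hB : ∀ (x : Hsp) (i : ℕ), (B x : ∀ _ : ℕ, ℂ) i = (x : ∀ _ : ℕ, ℂ) (i + 1))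

include hB

lemma B_ee_zero : B (ee 0) = 0 := by
  apply lp.ext
  funext i
  have h := hB (ee 0) i
  rw [h, ee_apply]
  simp

lemma B_ee_succ (j : ℕ) : B (ee (j + 1)) = ee j := by
  apply lp.ext
  funext i
  have h := hB (ee (j + 1)) i
  rw [h, ee_apply, ee_apply]
  simp

omit hB in
/-- the commutator map -/
def Dmap : (Hsp →L[ℂ] Hsp) → (Hsp →L[ℂ] Hsp) := fun V => (c • B) ∘L V - V ∘L (c • B)

lemma entry_D_zero (V : Hsp →L[ℂ] Hsp) (i : ℕ) :
    entry (Dmap B c V) i 0 = c * entry V (i + 1) 0 := by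
  simp only [Dmap, entry, ContinuousLinearMap.sub_apply, ContinuousLinearMap.comp_apply,
    ContinuousLinearMap.smul_apply, lp.coeFn_sub, Pi.sub_apply]
  rw [B_ee_zero B hB]
  simp only [smul_zero, map_zero, lp.coeFn_smul, Pi.smul_apply, smul_eq_mul]
  rw [hB (V (ee 0)) i]
  simp [lp.coeFn_zero]

lemma entry_D_succ (V : Hsp →L[ℂ] Hsp) (i j : ℕ) :
    entry (Dmap B c V) i (j + 1) = c * (entry V (i + 1) (j + 1) - entry V i j) := by
  simp only [Dmap, entry, ContinuousLinearMap.sub_apply, ContinuousLinearMap.comp_apply,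
    ContinuousLinearMap.smul_apply, lp.coeFn_sub, Pi.sub_apply]
  rw [B_ee_succ B hB j]
  simp only [map_smul, lp.coeFn_smul, Pi.smul_apply, smul_eq_mul]
  rw [hB (V (ee (j + 1))) i]
  ring

lemma inversion (A : Hsp →L[ℂ] Hsp) (n : ℕ) : ∀ d j : ℕ,
    c ^ (n + 1) * entry A (j + d + (n + 1)) j =
    ∑ k ∈ Finset.range (j + 1), ((n + k).choose k : ℂ) *
      entry ((Dmap B c)^[n + 1] A) (j - k + d) (j - k) := by
  induction n with
  | zero =>
    intro d j
    induction j generalizing d with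
    | zero =>
      simp only [Function.iterate_one, Finset.range_one, Finset.sum_singleton,
        Nat.choose_self, Nat.cast_one, one_mul, pow_one, Nat.zero_add, Nat.zero_sub,
        Nat.sub_zero, Nat.add_zero, zero_add]
      rw [entry_D_zero B c hB A d]
    | succ j ihj =>
      have hpeel := Finset.sum_range_succ' (fun k =>
        ((0 + k).choose k : ℂ) * entry ((Dmap B c)^[0 + 1] A) (j + 1 - k + d) (j + 1 - k)) (j + 1)
      rw [hpeel]
      have h1 : ∀ k ∈ Finset.range (j + 1),
          ((0 + (k + 1)).choose (k + 1) : ℂ) *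
            entry ((Dmap B c)^[0 + 1] A) (j + 1 - (k + 1) + d) (j + 1 - (k + 1))
          = ((0 + k).choose k : ℂ) * entry ((Dmap B c)^[0 + 1] A) (j - k + d) (j - k) := by
        intro k hk
        have : j + 1 - (k + 1) = j - k := by omega
        rw [this]
        simp [Nat.choose_self]
      rw [Finset.sum_congr rfl h1, ← ihj d]
      have h2 : entry ((Dmap B c)^[0 + 1] A) (j + 1 - 0 + d) (j + 1 - 0)
          = c * (entry A (j + 1 + d + 1) (j + 1) - entry A (j + 1 + d) j) := by
        simp only [Nat.sub_zero, Function.iterate_one]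
        exact entry_D_succ B c hB A (j + 1 + d) j
      rw [h2]
      have e1 : j + d + (0 + 1) = j + 1 + d := by omega
      have e2 : j + 1 + d + (0 + 1) = j + 1 + d + 1 := by omega
      rw [e1, e2]
      simp only [Nat.choose_self, Nat.cast_one, one_mul, pow_one, Nat.zero_add]
      ring
  | succ n ihn =>
    intro d j
    set X := (Dmap B c)^[n + 1] A with hX
    have hit : (Dmap B c)^[n + 1 + 1] A = Dmap B c X := by
      rw [Function.iterate_succ_apply']
    -- rewrite each term of the sum using the one-step recursion
    have hterm : ∀ k ∈ Finset.range (j + 1),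
        ((n + 1 + k).choose k : ℂ) * entry ((Dmap B c)^[n + 1 + 1] A) (j - k + d) (j - k)
        = c * (((n + 1 + k).choose k : ℂ) * entry X (j - k + d + 1) (j - k))
          - c * (((n + 1 + k).choose k : ℂ) *
              (if j - k = 0 then 0 else entry X (j - k + d) (j - k - 1))) := by
      intro k hk
      rw [hit]
      rcases h : j - k with _ | t
      · simp only [zero_add, reduceIte, mul_zero, sub_zero]
        rw [entry_D_zero B c hB X d]
        ring
      · simp only [Nat.succ_ne_zero, if_false, Nat.add_sub_cancel]
        rw [entry_D_succ B c hB X (t + 1 + d) t]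
        ring
    rw [Finset.sum_congr rfl hterm, Finset.sum_sub_distrib]
    -- the second sum: drop the vanishing k = j term and reindex
    have hzero : c * (((n + 1 + j).choose j : ℂ) *
        (if j - j = 0 then 0 else entry X (j - j + d) (j - j - 1))) = 0 := by
      simp
    have hsecond : ∑ k ∈ Finset.range (j + 1), (c * (((n + 1 + k).choose k : ℂ) *
          (if j - k = 0 then 0 else entry X (j - k + d) (j - k - 1))))
        = ∑ k ∈ Finset.range (j + 1), (if k = 0 then 0 else
            c * (((n + k).choose (k - 1) : ℂ) * entry X (j - k + d + 1) (j - k))) := by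
      rw [Finset.sum_range_succ, hzero, add_zero]
      rw [Finset.sum_range_succ' (fun k => if k = 0 then 0 else
            c * (((n + k).choose (k - 1) : ℂ) * entry X (j - k + d + 1) (j - k))) j]
      simp only [reduceIte, add_zero, Nat.succ_ne_zero, if_false]
      refine Finset.sum_congr rfl ?_
      intro k hk
      have hkj : k < j := Finset.mem_range.mp hk
      have h0 : j - k ≠ 0 := by omega
      rw [if_neg h0]
      have e1 : j - (k + 1) + d + 1 = j - k + d := by omega
      have e4 : j - (k + 1) = j - k - 1 := by omega
      have e3 : n + (k + 1) = n + 1 + k := by omega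
      rw [e3, Nat.add_sub_cancel, e1, e4]
    rw [hsecond, ← Finset.sum_sub_distrib]
    have hcombine : ∀ k ∈ Finset.range (j + 1),
        (c * (((n + 1 + k).choose k : ℂ) * entry X (j - k + d + 1) (j - k))
          - (if k = 0 then 0 else
              c * (((n + k).choose (k - 1) : ℂ) * entry X (j - k + d + 1) (j - k))))
        = c * (((n + k).choose k : ℂ) * entry X (j - k + (d + 1)) (j - k)) := by
      intro k hk
      have e5 : j - k + d + 1 = j - k + (d + 1) := by omega
      rcases k with _ | t
      · simp only [reduceIte, sub_zero, Nat.add_zero, Nat.choose_zero_right, e5]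
      · simp only [Nat.succ_ne_zero, if_false]
        rw [e5]
        have pascal : ((n + 1 + (t + 1)).choose (t + 1) : ℂ)
            = ((n + (t + 1)).choose t : ℂ) + ((n + (t + 1)).choose (t + 1) : ℂ) := by
          have e6 : n + 1 + (t + 1) = (n + (t + 1)) + 1 := by omega
          rw [e6]
          rw [Nat.choose_succ_succ (n + (t + 1)) t]
          push_cast
          ring
        have e7 : t + 1 - 1 = t := by omega
        rw [e7, pascal]
        ring
    rw [Finset.sum_congr rfl hcombine]
    have := ihn (d + 1) j
    calc c ^ (n + 1 + 1) * entry A (j + d + (n + 1 + 1)) j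
        = c * (c ^ (n + 1) * entry A (j + (d + 1) + (n + 1)) j) := by
          have e8 : j + (d + 1) + (n + 1) = j + d + (n + 1 + 1) := by omega
          rw [e8]; ring
      _ = c * ∑ k ∈ Finset.range (j + 1), ((n + k).choose k : ℂ) *
            entry ((Dmap B c)^[n + 1] A) (j - k + (d + 1)) (j - k) := by rw [this]
      _ = ∑ k ∈ Finset.range (j + 1), c * (((n + k).choose k : ℂ) *
            entry X (j - k + (d + 1)) (j - k)) := by
          rw [Finset.mul_sum]
end WithB

/-- hockey stick identity -/
lemma hockey (n : ℕ) : ∀ J : ℕ,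
    ∑ k ∈ Finset.range (J + 1), (n + k).choose k = (n + 1 + J).choose J := by
  intro J
  induction J with
  | zero => simp
  | succ J ih =>
    rw [Finset.sum_range_succ, ih]
    have e : n + (J + 1) = n + 1 + J := by omega
    have e2 : n + 1 + (J + 1) = (n + 1 + J) + 1 := by omega
    rw [e, e2, Nat.choose_succ_succ]

/-- binomial growth estimate -/
lemma growth (K : ℕ) : ∀ y x : ℕ, (K - 1) * y ≤ x → K ^ y ≤ (x + y).choose y := by
  intro y
  induction y with
  | zero => intro x _; simp
  | succ y ih =>
    intro x hx
    have hx' : (K - 1) * y + (K - 1) ≤ x := by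
      calc (K - 1) * y + (K - 1) = (K - 1) * (y + 1) := by ring
        _ ≤ x := hx
    have hsum := hockey y x
    have hsymm : (y + 1 + x).choose x = (x + (y + 1)).choose (y + 1) := by
      rw [show y + 1 + x = x + (y + 1) by omega]
      rw [← Nat.choose_symm (show y + 1 ≤ x + (y + 1) by omega)]
      congr 1
      omega
    have hterm : ∀ k ∈ Finset.Ico (x + 1 - K) (x + 1), K ^ y ≤ (y + k).choose k := by
      intro k hk
      rcases Finset.mem_Ico.mp hk with ⟨h1, _⟩
      have hky : (K - 1) * y ≤ k := by
        generalize hgen : (K - 1) * y = t at hx' ⊢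
        omega
      have hsy : (y + k).choose k = (k + y).choose y := by
        rw [show y + k = k + y by omega]
        rw [← Nat.choose_symm (show y ≤ k + y by omega)]
        congr 1
        omega
      rw [hsy]
      exact ih k hky
    have hsub : Finset.Ico (x + 1 - K) (x + 1) ⊆ Finset.range (x + 1) := by
      intro t ht
      rcases Finset.mem_Ico.mp ht with ⟨_, h2⟩
      exact Finset.mem_range.mpr h2
    have hcard : (Finset.Ico (x + 1 - K) (x + 1)).card = K := by
      rw [Nat.card_Ico]
      generalize hgen : (K - 1) * y = t at hx'
      omega
    calc K ^ (y + 1) = K * K ^ y := by ring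
      _ = ∑ _k ∈ Finset.Ico (x + 1 - K) (x + 1), K ^ y := by
          rw [Finset.sum_const, hcard, smul_eq_mul]
      _ ≤ ∑ k ∈ Finset.Ico (x + 1 - K) (x + 1), (y + k).choose k :=
          Finset.sum_le_sum hterm
      _ ≤ ∑ k ∈ Finset.range (x + 1), (y + k).choose k :=
          Finset.sum_le_sum_of_subset hsub
      _ = (x + (y + 1)).choose (y + 1) := by rw [hsum, hsymm]

/-- the coordinate functional at 0 -/
def coord0 : Hsp →L[ℂ] ℂ :=
  LinearMap.mkContinuous
    { toFun := fun x => (x : ∀ _ : ℕ, ℂ) 0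
      map_add' := fun x y => by simp [lp.coeFn_add]
      map_smul' := fun a x => by simp [lp.coeFn_smul] }
    1
    (fun x => by
      show ‖(x : ∀ _ : ℕ, ℂ) 0‖ ≤ 1 * ‖x‖
      simpa using lp.norm_apply_le_norm (p := 2) (by norm_num) x 0)

lemma coord0_apply (x : Hsp) : coord0 x = (x : ∀ _ : ℕ, ℂ) 0 := rfl

/-- rank one operator x ↦ x₀ • v -/
def rk1 (v : Hsp) : Hsp →L[ℂ] Hsp := coord0.smulRight v

lemma isCompactOperator_rk1 (v : Hsp) : IsCompactOperator (rk1 v) := by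
  refine ⟨(fun a : ℂ => a • v) '' Metric.closedBall 0 1, ?_, ?_⟩
  · exact (isCompact_closedBall (0 : ℂ) 1).image (continuous_id.smul continuous_const)
  · apply Filter.mem_of_superset (Metric.closedBall_mem_nhds (0 : Hsp) one_pos)
    intro x hx
    refine ⟨coord0 x, ?_, rfl⟩
    rw [Metric.mem_closedBall, dist_zero_right]
    rw [Metric.mem_closedBall, dist_zero_right] at hx
    calc ‖coord0 x‖ ≤ ‖x‖ := lp.norm_apply_le_norm (p := 2) (by norm_num) x 0
      _ ≤ 1 := hx

lemma entry_rk1 (v : Hsp) (i j : ℕ) :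
    entry (rk1 v) i j = (ee j : ∀ _ : ℕ, ℂ) 0 * (v : ∀ _ : ℕ, ℂ) i := by
  simp only [entry, rk1, ContinuousLinearMap.smulRight_apply, lp.coeFn_smul,
    Pi.smul_apply, smul_eq_mul, coord0_apply]

end

end Stmt18Aux

set_option maxHeartbeats 1000000 in
/-- Main theorem: the commutator map `Δ_{cB} : S ↦ (cB)S − S(cB)` induced on the compact
operators `K(ℓ²)` by a scalar multiple `cB` of the backward shift `B` on `ℓ²(ℕ)` is not
hypercyclic, for any constant `c ∈ ℂ`: no compact operator `A` has a `Δ_{cB}`-orbit that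
is dense (in operator norm) in the space of compact operators. -/
theorem stmt_18 (B : lp (fun _ : ℕ => ℂ) 2 →L[ℂ] lp (fun _ : ℕ => ℂ) 2)
    (hB : ∀ (x : lp (fun _ : ℕ => ℂ) 2) (i : ℕ),
      (B x : ∀ _ : ℕ, ℂ) i = (x : ∀ _ : ℕ, ℂ) (i + 1))
    (c : ℂ) :
    ¬ ∃ A : lp (fun _ : ℕ => ℂ) 2 →L[ℂ] lp (fun _ : ℕ => ℂ) 2,
        IsCompactOperator A ∧
        ∀ S : lp (fun _ : ℕ => ℂ) 2 →L[ℂ] lp (fun _ : ℕ => ℂ) 2,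
          IsCompactOperator S → ∀ ε : ℝ, 0 < ε →
            ∃ n : ℕ, ‖(fun V => (c • B) ∘L V - V ∘L (c • B))^[n] A - S‖ < ε := by
  rintro ⟨A, -, hyp⟩
  classical
  have hDe : (fun V : Stmt18Aux.Hsp →L[ℂ] Stmt18Aux.Hsp =>
      (c • B) ∘L V - V ∘L (c • B)) = Stmt18Aux.Dmap B c := rfl
  rw [hDe] at hyp
  set M : ℝ := ‖A‖ with hM
  have hM0 : 0 ≤ M := norm_nonneg A
  set m : ℕ := ⌈2 * ‖c‖⌉₊ + 1 with hm
  set X : ℝ := (‖c‖ + 1) * M with hXdef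
  have hX0 : 0 ≤ X := mul_nonneg (by positivity) hM0
  have hMX : M ≤ X := by
    rw [hXdef]
    nlinarith [norm_nonneg c]
  set r : ℝ := (m : ℝ) + 2 + X with hr
  have hr0 : 0 ≤ r := by positivity
  set S : Stmt18Aux.Hsp →L[ℂ] Stmt18Aux.Hsp :=
    Stmt18Aux.rk1 (((r : ℝ) : ℂ) • Stmt18Aux.ee 0) with hS
  obtain ⟨n, hn⟩ := hyp S (Stmt18Aux.isCompactOperator_rk1 _) 1 one_pos
  -- diagonal entries of the target operator
  have hSentry : ∀ p : ℕ, Stmt18Aux.entry S p p = if p = 0 then ((r : ℝ) : ℂ) else 0 := by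
    intro p
    rw [hS, Stmt18Aux.entry_rk1]
    rw [lp.coeFn_smul, Pi.smul_apply, smul_eq_mul]
    rcases p with _ | q
    · simp [Stmt18Aux.ee_apply]
    · simp [Stmt18Aux.ee_apply]
  -- diagonal entries of the orbit element are close to those of S
  have hu : ∀ p : ℕ, ‖Stmt18Aux.entry ((Stmt18Aux.Dmap B c)^[n] A) p p
      - Stmt18Aux.entry S p p‖ < 1 := by
    intro p
    calc ‖Stmt18Aux.entry ((Stmt18Aux.Dmap B c)^[n] A) p p - Stmt18Aux.entry S p p‖
        = ‖Stmt18Aux.entry ((Stmt18Aux.Dmap B c)^[n] A - S) p p‖ := by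
          rw [Stmt18Aux.entry_sub]
      _ ≤ ‖(Stmt18Aux.Dmap B c)^[n] A - S‖ := Stmt18Aux.norm_entry_le _ p p
      _ < 1 := hn
  have hrnorm : ‖((r : ℝ) : ℂ)‖ = r := by
    rw [Complex.norm_real, Real.norm_eq_abs, abs_of_nonneg hr0]
  -- n cannot be 0
  rcases n with _ | n'
  · have h0 := hu 0
    rw [hSentry 0, if_pos rfl, Function.iterate_zero_apply] at h0
    have h1 : ‖((r : ℝ) : ℂ)‖ - ‖Stmt18Aux.entry A 0 0‖ ≤
        ‖Stmt18Aux.entry A 0 0 - ((r : ℝ) : ℂ)‖ := by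
      rw [norm_sub_rev]
      exact norm_sub_norm_le _ _
    have h2 : ‖Stmt18Aux.entry A 0 0‖ ≤ M := Stmt18Aux.norm_entry_le A 0 0
    rw [hrnorm] at h1
    have : r ≤ M + 1 := by linarith
    rw [hr] at this
    have hmn : (0 : ℝ) ≤ (m : ℝ) := Nat.cast_nonneg m
    linarith
  -- now n = n' + 1 ≥ 1
  set j : ℕ := m * (n' + 1) with hj
  have hm1 : 1 ≤ m := by omega
  have hj1 : 1 ≤ j := by
    rw [hj]
    exact Nat.one_le_iff_ne_zero.mpr (by positivity)
  have key := Stmt18Aux.inversion B c hB A n' 0 j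
  -- upper bound of LHS of key
  have hLHS : ‖c ^ (n' + 1) * Stmt18Aux.entry A (j + 0 + (n' + 1)) j‖
      ≤ ‖c‖ ^ (n' + 1) * M := by
    rw [norm_mul, norm_pow]
    exact mul_le_mul_of_nonneg_left (Stmt18Aux.norm_entry_le A _ _)
      (pow_nonneg (norm_nonneg c) _)
  -- split the sum
  set T : ℕ → ℂ := fun p => Stmt18Aux.entry ((Stmt18Aux.Dmap B c)^[n' + 1] A) p p with hT
  have hsplit : ∑ k ∈ Finset.range (j + 1), ((n' + k).choose k : ℂ) *
        Stmt18Aux.entry ((Stmt18Aux.Dmap B c)^[n' + 1] A) (j - k + 0) (j - k)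
      = (∑ k ∈ Finset.range j, ((n' + k).choose k : ℂ) * T (j - k))
        + ((n' + j).choose j : ℂ) * T 0 := by
    rw [Finset.sum_range_succ]
    simp only [hT, Nat.add_zero, Nat.sub_self]
  -- norm lower bounds
  have hu0 : r - 1 ≤ ‖T 0‖ := by
    have h0 := hu 0
    rw [hSentry 0, if_pos rfl] at h0
    have h1 : ‖((r : ℝ) : ℂ)‖ - ‖T 0‖ ≤ ‖T 0 - ((r : ℝ) : ℂ)‖ := by
      rw [norm_sub_rev]
      exact norm_sub_norm_le _ _
    rw [hrnorm] at h1
    rw [hT]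
    linarith
  have hup : ∀ p : ℕ, p ≠ 0 → ‖T p‖ ≤ 1 := by
    intro p hp
    have h0 := hu p
    rw [hSentry p, if_neg hp, sub_zero] at h0
    exact le_of_lt h0
  set Cb : ℕ := (n' + j).choose j with hCb
  -- the small-terms sum in ℕ
  have hsum_small : ∑ k ∈ Finset.range j, (n' + k).choose k = m * Cb := by
    have h := Stmt18Aux.hockey n' (j - 1)
    rw [show j - 1 + 1 = j by omega] at h
    rw [h]
    have hident := Nat.choose_succ_right_eq (n' + j) (j - 1)
    rw [show j - 1 + 1 = j by omega] at hident
    rw [show n' + j - (j - 1) = n' + 1 by omega] at hident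
    -- hident : (n' + j).choose j * j = (n' + j).choose (j - 1) * (n' + 1)
    have hj' : (n' + j).choose j * j = Cb * m * (n' + 1) := by
      rw [hCb, hj]
      ring
    rw [hj'] at hident
    have := Nat.eq_of_mul_eq_mul_right (Nat.succ_pos n') hident.symm
    rw [show n' + 1 + (j - 1) = n' + j by omega, this]
    exact Nat.mul_comm Cb m
  have hsmall : ‖∑ k ∈ Finset.range j, ((n' + k).choose k : ℂ) * T (j - k)‖
      ≤ (m : ℝ) * (Cb : ℝ) := by
    calc ‖∑ k ∈ Finset.range j, ((n' + k).choose k : ℂ) * T (j - k)‖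
        ≤ ∑ k ∈ Finset.range j, ‖((n' + k).choose k : ℂ) * T (j - k)‖ :=
          norm_sum_le _ _
      _ ≤ ∑ k ∈ Finset.range j, ((n' + k).choose k : ℝ) := by
          refine Finset.sum_le_sum ?_
          intro k hk
          rw [norm_mul]
          have h1 : ‖(((n' + k).choose k : ℕ) : ℂ)‖ = ((n' + k).choose k : ℝ) := by
            rw [Complex.norm_natCast]
          rw [h1]
          have h2 : ‖T (j - k)‖ ≤ 1 := by
            apply hup
            have := Finset.mem_range.mp hk
            omega
          nlinarith [Nat.cast_nonneg (α := ℝ) ((n' + k).choose k)]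
      _ = (m : ℝ) * (Cb : ℝ) := by
          rw [← Nat.cast_sum]
          rw [hsum_small]
          push_cast
          ring
  -- lower bound for the full sum
  have hfull : (Cb : ℝ) * (r - 1) - (m : ℝ) * (Cb : ℝ)
      ≤ ‖c ^ (n' + 1) * Stmt18Aux.entry A (j + 0 + (n' + 1)) j‖ := by
    rw [key, hsplit]
    have h1 : (Cb : ℝ) * (r - 1) ≤ ‖((n' + j).choose j : ℂ) * T 0‖ := by
      rw [norm_mul, Complex.norm_natCast, ← hCb]
      have : (0 : ℝ) ≤ (Cb : ℝ) := Nat.cast_nonneg _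
      nlinarith
    calc (Cb : ℝ) * (r - 1) - (m : ℝ) * (Cb : ℝ)
        ≤ ‖((n' + j).choose j : ℂ) * T 0‖
          - ‖∑ k ∈ Finset.range j, ((n' + k).choose k : ℂ) * T (j - k)‖ := by
          linarith
      _ ≤ ‖(∑ k ∈ Finset.range j, ((n' + k).choose k : ℂ) * T (j - k))
            + ((n' + j).choose j : ℂ) * T 0‖ := by
          have h3 := norm_sub_le ((∑ k ∈ Finset.range j, ((n' + k).choose k : ℂ) * T (j - k))
            + ((n' + j).choose j : ℂ) * T 0)
            (∑ k ∈ Finset.range j, ((n' + k).choose k : ℂ) * T (j - k))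
          simp only [add_sub_cancel_left] at h3
          linarith
  -- growth lower bound for Cb
  have hgrow : (m + 1 : ℕ) ^ n' ≤ Cb := by
    have h := Stmt18Aux.growth (m + 1) n' j
      (by
        rw [Nat.add_sub_cancel, hj]
        exact Nat.mul_le_mul_left m (by omega))
    have hsy : (j + n').choose n' = (n' + j).choose j := by
      rw [← Nat.choose_symm (show n' ≤ j + n' by omega)]
      rw [show j + n' - n' = j by omega, show j + n' = n' + j by omega]
    rw [hsy] at h
    exact h
  -- final numeric contradiction
  have hcm : ‖c‖ + 1 ≤ (m : ℝ) + 1 := by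
    have h1 : 2 * ‖c‖ ≤ (⌈2 * ‖c‖⌉₊ : ℝ) := Nat.le_ceil _
    have h2 : ((⌈2 * ‖c‖⌉₊ + 1 : ℕ) : ℝ) = (⌈2 * ‖c‖⌉₊ : ℝ) + 1 := by push_cast; ring
    rw [hm, h2]
    nlinarith [norm_nonneg c]
  have hc1 : (0 : ℝ) < ‖c‖ + 1 := by positivity
  have hpow1 : (‖c‖ + 1) ^ n' ≤ ((m : ℝ) + 1) ^ n' :=
    pow_le_pow_left₀ (le_of_lt hc1) hcm n'
  have hpow2 : ((m + 1 : ℕ) : ℝ) ^ n' ≤ (Cb : ℝ) := by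
    have := hgrow
    calc ((m + 1 : ℕ) : ℝ) ^ n' = (((m + 1) ^ n' : ℕ) : ℝ) := by push_cast; ring
      _ ≤ (Cb : ℝ) := Nat.cast_le.mpr hgrow
  have hr1m : r - 1 - (m : ℝ) = 1 + X := by rw [hr]; ring
  have hchain1 : ((m : ℝ) + 1) ^ n' * (1 + X) ≤ ‖c‖ ^ (n' + 1) * M := by
    have h1 : (Cb : ℝ) * (1 + X) ≤ ‖c‖ ^ (n' + 1) * M := by
      have := le_trans hfull hLHS
      nlinarith [Nat.cast_nonneg (α := ℝ) Cb]
    have h2 : ((m : ℝ) + 1) ^ n' ≤ (Cb : ℝ) := by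
      calc ((m : ℝ) + 1) ^ n' = ((m + 1 : ℕ) : ℝ) ^ n' := by push_cast; ring
        _ ≤ (Cb : ℝ) := hpow2
    nlinarith [pow_nonneg (show (0:ℝ) ≤ (m:ℝ)+1 by positivity) n']
  have hchain2 : ‖c‖ ^ (n' + 1) * M ≤ (‖c‖ + 1) ^ n' * X := by
    have h1 : ‖c‖ ^ (n' + 1) ≤ (‖c‖ + 1) ^ (n' + 1) :=
      pow_le_pow_left₀ (norm_nonneg c) (by linarith) _
    calc ‖c‖ ^ (n' + 1) * M ≤ (‖c‖ + 1) ^ (n' + 1) * M :=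
          mul_le_mul_of_nonneg_right h1 hM0
      _ = (‖c‖ + 1) ^ n' * X := by rw [hXdef, pow_succ]; ring
  have hfin : (‖c‖ + 1) ^ n' * (1 + X) ≤ (‖c‖ + 1) ^ n' * X := by
    calc (‖c‖ + 1) ^ n' * (1 + X) ≤ ((m : ℝ) + 1) ^ n' * (1 + X) := by
          have : (0:ℝ) ≤ 1 + X := by linarith
          nlinarith
      _ ≤ ‖c‖ ^ (n' + 1) * M := hchain1
      _ ≤ (‖c‖ + 1) ^ n' * X := hchain2
  have hppos : (0 : ℝ) < (‖c‖ + 1) ^ n' := pow_pos hc1 n'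
  nlinarith
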